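/- Let y ∈ ℝ^M, A ∈ ℝ^{M×N}, λ > 0, and B ∈ ℝ^{M'×N}. If the matrix AᵀA − λ BᵀB is positive semidefinite, then the cost function F : ℝ^N → ℝ defined by F(x) = (1/2)‖y − A x‖₂² + λ ψ_B(x) is convex on ℝ^N. -/

import Mathlib

open Matrix

/-- The ℓ₁ norm on `ℝ^N`. -/
noncomputable def norm1 {N : ℕ} (v : Fin N → ℝ) : ℝ := ∑ n, |v n|

/-- The squared Euclidean (ℓ₂) norm on `ℝ^M`. -/
def norm2sq {M : ℕ} (u : Fin M → ℝ) : ℝ := ∑ m, (u m) ^ 2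

/-- The generalized Huber function
`S_B(x) = inf_v ( ‖v‖₁ + (1/2) ‖B(x - v)‖₂² )`. -/
noncomputable def genHuber {M N : ℕ} (B : Matrix (Fin M) (Fin N) ℝ) (x : Fin N → ℝ) : ℝ :=
  ⨅ v : Fin N → ℝ, (norm1 v + (1 / 2) * norm2sq (B.mulVec (x - v)))

/-- The generalized MC (GMC) penalty `ψ_B(x) = ‖x‖₁ - S_B(x)`. -/
noncomputable def gmcPenalty {M N : ℕ} (B : Matrix (Fin M) (Fin N) ℝ) (x : Fin N → ℝ) : ℝ :=
  norm1 x - genHuber B x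

lemma norm1_nonneg {N : ℕ} (v : Fin N → ℝ) : 0 ≤ norm1 v :=
  Finset.sum_nonneg fun _ _ => abs_nonneg _

lemma norm2sq_nonneg {M : ℕ} (u : Fin M → ℝ) : 0 ≤ norm2sq u :=
  Finset.sum_nonneg fun _ _ => sq_nonneg _

lemma norm2sq_combo {M : ℕ} (a b : ℝ) (hab : a + b = 1) (p q : Fin M → ℝ) :
    norm2sq (a • p + b • q) = a * norm2sq p + b * norm2sq q - a * b * norm2sq (p - q) := by
  have hb : b = 1 - a := by linarith
  subst hb
  simp only [norm2sq, Pi.add_apply, Pi.smul_apply, Pi.sub_apply, smul_eq_mul,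
    Finset.mul_sum, ← Finset.sum_add_distrib, ← Finset.sum_sub_distrib]
  exact Finset.sum_congr rfl fun m _ => by ring

lemma norm1_combo {N : ℕ} (a b : ℝ) (ha : 0 ≤ a) (hb : 0 ≤ b) (x x' : Fin N → ℝ) :
    norm1 (a • x + b • x') ≤ a * norm1 x + b * norm1 x' := by
  simp only [norm1, Pi.add_apply, Pi.smul_apply, smul_eq_mul, Finset.mul_sum,
    ← Finset.sum_add_distrib]
  refine Finset.sum_le_sum fun n _ => ?_
  calc |a * x n + b * x' n| ≤ |a * x n| + |b * x' n| := abs_add_le _ _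
  _ = a * |x n| + b * |x' n| := by rw [abs_mul, abs_mul, abs_of_nonneg ha, abs_of_nonneg hb]

lemma quad_eq {M M' N : ℕ} (A : Matrix (Fin M) (Fin N) ℝ) (lam : ℝ)
    (B : Matrix (Fin M') (Fin N) ℝ) (w : Fin N → ℝ) :
    w ⬝ᵥ (Aᵀ * A - lam • (Bᵀ * B)).mulVec w
      = norm2sq (A.mulVec w) - lam * norm2sq (B.mulVec w) := by
  have h1 : ∀ {K : ℕ} (C : Matrix (Fin K) (Fin N) ℝ),
      w ⬝ᵥ (Cᵀ * C).mulVec w = norm2sq (C.mulVec w) := by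
    intro K C
    rw [← Matrix.mulVec_mulVec, Matrix.dotProduct_mulVec, Matrix.vecMul_transpose]
    simp [norm2sq, dotProduct, sq]
  simp only [Matrix.sub_mulVec, Matrix.smul_mulVec, dotProduct_sub, dotProduct_smul,
    smul_eq_mul, h1]

lemma genHuber_bddBelow {M N : ℕ} (B : Matrix (Fin M) (Fin N) ℝ) (x : Fin N → ℝ) :
    BddBelow (Set.range fun v : Fin N → ℝ =>
      norm1 v + (1 / 2) * norm2sq (B.mulVec (x - v))) := by
  refine ⟨0, fun r ⟨v, hv⟩ => ?_⟩
  have := norm1_nonneg v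
  have := norm2sq_nonneg (B.mulVec (x - v))
  nlinarith [hv]

lemma genHuber_le {M N : ℕ} (B : Matrix (Fin M) (Fin N) ℝ) (x v : Fin N → ℝ) :
    genHuber B x ≤ norm1 v + (1 / 2) * norm2sq (B.mulVec (x - v)) :=
  ciInf_le (genHuber_bddBelow B x) v

/-- If `AᵀA - λ BᵀB` is positive semidefinite, then the GMC-regularized least squares
cost function `F(x) = (1/2)‖y - Ax‖₂² + λ ψ_B(x)` is convex. -/
theorem gmc_costFunction_convex {M M' N : ℕ} (y : Fin M → ℝ)
    (A : Matrix (Fin M) (Fin N) ℝ) (lam : ℝ) (hlam : 0 < lam)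
    (B : Matrix (Fin M') (Fin N) ℝ)
    (h : (Aᵀ * A - lam • (Bᵀ * B)).PosSemidef) :
    ConvexOn ℝ Set.univ
      (fun x : Fin N → ℝ => (1 / 2) * norm2sq (y - A.mulVec x) + lam * gmcPenalty B x) := by
  refine ⟨convex_univ, fun x _ x' _ a b ha hb hab => ?_⟩
  simp only [gmcPenalty, smul_eq_mul]
  set z : Fin N → ℝ := a • x + b • x' with hz
  -- reduce to: for all v, pointwise bound
  rw [show lam * (norm1 z - genHuber B z)
      = lam * norm1 z - lam * genHuber B z by ring]
  have key : ∀ v : Fin N → ℝ,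
      (1 / 2) * norm2sq (y - A.mulVec z) + lam * norm1 z
        - lam * (norm1 v + (1 / 2) * norm2sq (B.mulVec (z - v)))
      ≤ a * ((1 / 2) * norm2sq (y - A.mulVec x) + lam * (norm1 x - genHuber B x))
        + b * ((1 / 2) * norm2sq (y - A.mulVec x') + lam * (norm1 x' - genHuber B x')) := by
    intro v
    have hx : genHuber B x ≤ norm1 v + (1 / 2) * norm2sq (B.mulVec (x - v)) :=
      genHuber_le B x v
    have hx' : genHuber B x' ≤ norm1 v + (1 / 2) * norm2sq (B.mulVec (x' - v)) :=
      genHuber_le B x' v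
    -- quadratic combinations
    have hA : y - A.mulVec z = a • (y - A.mulVec x) + b • (y - A.mulVec x') := by
      funext m
      simp only [hz, Matrix.mulVec_add, Matrix.mulVec_smul, Pi.add_apply, Pi.sub_apply,
        Pi.smul_apply, smul_eq_mul]
      have hb1 : b = 1 - a := by linarith
      subst hb1; ring
    have hB : B.mulVec (z - v) = a • B.mulVec (x - v) + b • B.mulVec (x' - v) := by
      have : z - v = a • (x - v) + b • (x' - v) := by
        funext n
        simp only [hz, Pi.add_apply, Pi.sub_apply, Pi.smul_apply, smul_eq_mul]
        have hb1 : b = 1 - a := by linarith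
        subst hb1; ring
      rw [this, Matrix.mulVec_add, Matrix.mulVec_smul, Matrix.mulVec_smul]
    have e1 : norm2sq (y - A.mulVec z)
        = a * norm2sq (y - A.mulVec x) + b * norm2sq (y - A.mulVec x')
          - a * b * norm2sq ((y - A.mulVec x) - (y - A.mulVec x')) := by
      rw [hA, norm2sq_combo a b hab]
    have e2 : norm2sq (B.mulVec (z - v))
        = a * norm2sq (B.mulVec (x - v)) + b * norm2sq (B.mulVec (x' - v))
          - a * b * norm2sq (B.mulVec (x - v) - B.mulVec (x' - v)) := by
      rw [hB, norm2sq_combo a b hab]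
    have d1 : (y - A.mulVec x) - (y - A.mulVec x') = A.mulVec (x' - x) := by
      rw [Matrix.mulVec_sub]
      abel
    have d2 : B.mulVec (x - v) - B.mulVec (x' - v) = B.mulVec (x - x') := by
      rw [Matrix.mulVec_sub, Matrix.mulVec_sub, Matrix.mulVec_sub]
      abel
    have hswap : norm2sq (A.mulVec (x' - x)) = norm2sq (A.mulVec (x - x')) := by
      have : x' - x = -(x - x') := by funext n; simp
      rw [this, Matrix.mulVec_neg]
      simp [norm2sq]
    have hpsd : 0 ≤ norm2sq (A.mulVec (x - x')) - lam * norm2sq (B.mulVec (x - x')) := by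
      rw [← quad_eq]
      simpa only [star_trivial] using h.dotProduct_mulVec_nonneg (x - x')
    have hn1 : norm1 z ≤ a * norm1 x + b * norm1 x' := norm1_combo a b ha hb x x'
    have hab' : 0 ≤ a * b := mul_nonneg ha hb
    rw [d1] at e1
    rw [d2] at e2
    rw [hswap] at e1
    have s1 := mul_le_mul_of_nonneg_left hx (mul_nonneg hlam.le ha)
    have s2 := mul_le_mul_of_nonneg_left hx' (mul_nonneg hlam.le hb)
    have s3 := mul_le_mul_of_nonneg_left hn1 hlam.le
    have s4 : 0 ≤ a * b * (norm2sq (A.mulVec (x - x')) - lam * norm2sq (B.mulVec (x - x'))) :=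
      mul_nonneg hab' hpsd
    have e2' : lam * norm2sq (B.mulVec (z - v))
        = lam * a * norm2sq (B.mulVec (x - v)) + lam * b * norm2sq (B.mulVec (x' - v))
          - lam * (a * b) * norm2sq (B.mulVec (x - x')) := by rw [e2]; ring
    have hvv : lam * a * norm1 v + lam * b * norm1 v = lam * norm1 v := by
      have hb1 : b = 1 - a := by linarith
      subst hb1; ring
    nlinarith [s1, s2, s3, s4, e1, e2', hvv]
  set R : ℝ := a * ((1 / 2) * norm2sq (y - A.mulVec x) + lam * (norm1 x - genHuber B x))
      + b * ((1 / 2) * norm2sq (y - A.mulVec x') + lam * (norm1 x' - genHuber B x')) with hR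
  have hinf : ((1 / 2) * norm2sq (y - A.mulVec z) + lam * norm1 z - R) / lam
      ≤ genHuber B z := by
    refine le_ciInf fun v => ?_
    rw [div_le_iff₀ hlam]
    nlinarith [key v]
  rw [div_le_iff₀ hlam] at hinf
  nlinarith [hinf]
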